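/- Let R > 0, L > 0, π > 0 be real numbers, let s̲ and s̄ be real numbers with 0 < s̲ ≤ s̄, suppose 2Rπ > L, and let α be a real number with α ≥ (s̄/s̲)·ln(2Rπ/L). Then for all real numbers y₀ ≤ y₁ the conservative solar-regime price p̲₁(y) = (L/(2R))·(2Rπ/L)^(y/s̲) satisfies ∫_{y₀}^{y₁} p̲₁(y) dy ≥ (1/α)·s̄·(p̲₁(y₁) − p̲₁(y₀)). (Integrated allocation–payment inequality under conservative solar pricing: the payment collected covers a 1/α fraction of the conjugate increase computed with the solar upper bound s̄.) -/

import Mathlib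

/-- Integrated allocation–payment inequality under conservative solar pricing:
for `y₀ ≤ y₁`, the payment collected from the conservative solar-regime price
`p̲₁(y) = (L/(2R))·(2Rπ/L)^(y/s̲)` covers a `1/α` fraction of the conjugate
increase computed with the solar upper bound `s̄`. -/
theorem conservative_solar_integrated_allocation_payment
    (R L π slo shi α : ℝ) (hR : 0 < R) (hL : 0 < L) (hπ : 0 < π)
    (hslo : 0 < slo) (hle : slo ≤ shi)
    (hbase : L < 2 * R * π)
    (hα : shi / slo * Real.log (2 * R * π / L) ≤ α)
    (y₀ y₁ : ℝ) (hy : y₀ ≤ y₁) :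
    (∫ y in y₀..y₁, L / (2 * R) * (2 * R * π / L) ^ (y / slo)) ≥
      (1 / α) * shi * (L / (2 * R) * (2 * R * π / L) ^ (y₁ / slo)
        - L / (2 * R) * (2 * R * π / L) ^ (y₀ / slo)) := by
  set b : ℝ := 2 * R * π / L with hb
  have hb1 : 1 < b := (one_lt_div hL).2 hbase
  have hb0 : 0 < b := lt_trans one_pos hb1
  have hlogb : 0 < Real.log b := Real.log_pos hb1
  have hc : 0 < L / (2 * R) := div_pos hL (by linarith)
  set k : ℝ := Real.log b / slo with hk
  have hk0 : 0 < k := div_pos hlogb hslo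
  have hrpow : ∀ y : ℝ, b ^ (y / slo) = Real.exp (y * k) := by
    intro y
    rw [Real.rpow_def_of_pos hb0, hk]
    ring_nf
  have hα0 : 0 < α :=
    lt_of_lt_of_le (mul_pos (div_pos (lt_of_lt_of_le hslo hle) hslo) hlogb) hα
  -- compute the integral
  have hint : (∫ y in y₀..y₁, L / (2 * R) * b ^ (y / slo))
      = L / (2 * R) * (k⁻¹ * (Real.exp (y₁ * k) - Real.exp (y₀ * k))) := by
    simp_rw [hrpow, intervalIntegral.integral_const_mul]
    rw [intervalIntegral.integral_comp_mul_right Real.exp (ne_of_gt hk0),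
      smul_eq_mul, integral_exp]
  rw [hint]
  have hD : 0 ≤ Real.exp (y₁ * k) - Real.exp (y₀ * k) := by
    have := Real.exp_le_exp.2 (mul_le_mul_of_nonneg_right hy hk0.le)
    linarith
  rw [ge_iff_le, hrpow, hrpow]
  have hkey : 1 / α * shi ≤ k⁻¹ := by
    rw [hk, inv_div, div_mul_eq_mul_div, one_mul, div_le_div_iff₀ hα0 hlogb]
    have := mul_le_mul_of_nonneg_right hα hslo.le
    rw [div_mul_eq_mul_div, div_mul_cancel₀ _ (ne_of_gt hslo)] at this
    linarith
  have h1 := mul_le_mul_of_nonneg_right hkey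
    (mul_nonneg hc.le hD)
  nlinarith [h1]
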